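/- arXiv:1702.02484 — 2 statements merged into one kernel-verified Lean document; each statement's English description precedes it below -/
import Mathlib

section
/- Define C₀ := R + ‖f‖/‖A‖ and C_der := ‖A‖ + ‖B‖R + (‖B‖/‖A‖)·‖f‖. Then for every v ∈ B_R and every i ≥ 0, the derivatives of the solution of du/dt = -Au - B(u,u) + f satisfy ‖Dⁱv‖ ≤ C₀·(C_der)ⁱ·i!. -/
set_option maxHeartbeats 1000000
set_option synthInstance.maxHeartbeats 200000


/-- Factorial growth bound for the derivatives of the solution: with
`C₀ = R + ‖f‖/‖A‖` and `C_der = ‖A‖ + ‖B‖R + (‖B‖/‖A‖)‖f‖`, if `u` solves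
`du/dt = -Au - B(u,u) + f` with `u(0) = v`, `‖v‖ ≤ R`, and the trajectory stays
in the ball of radius `R`, then `‖Dⁱv‖ ≤ C₀·C_derⁱ·i!` for every `i ≥ 0`. -/
theorem iteratedDeriv_solution_norm_bound
    (d : ℕ)
    (A : EuclideanSpace ℝ (Fin d) →L[ℝ] EuclideanSpace ℝ (Fin d))
    (B : EuclideanSpace ℝ (Fin d) →L[ℝ]
      EuclideanSpace ℝ (Fin d) →L[ℝ] EuclideanSpace ℝ (Fin d))
    (f : EuclideanSpace ℝ (Fin d))
    (R : ℝ) (hR : 0 < R) (hA : A ≠ 0)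
    (u : ℝ → EuclideanSpace ℝ (Fin d)) (v : EuclideanSpace ℝ (Fin d))
    (hu0 : u 0 = v) (hvR : ‖v‖ ≤ R)
    (hu : ∀ t : ℝ, HasDerivAt u (-A (u t) - B (u t) (u t) + f) t)
    (huR : ∀ t : ℝ, ‖u t‖ ≤ R) :
    ∀ i : ℕ, ‖iteratedDeriv i u 0‖ ≤
      (R + ‖f‖ / ‖A‖) * (‖A‖ + ‖B‖ * R + (‖B‖ / ‖A‖) * ‖f‖) ^ i * (i.factorial : ℝ) := by
  have hAn : (0:ℝ) < ‖A‖ := norm_pos_iff.mpr hA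
  set C₀ : ℝ := R + ‖f‖ / ‖A‖ with hC₀def
  set K : ℝ := ‖A‖ + ‖B‖ * R + (‖B‖ / ‖A‖) * ‖f‖ with hKdef
  have hC₀pos : 0 < C₀ := by positivity
  have hRC₀ : R ≤ C₀ := le_add_of_nonneg_right (by positivity)
  have hAC₀ : ‖A‖ * C₀ = ‖A‖ * R + ‖f‖ := by
    rw [hC₀def]; field_simp
  have hKeq : K = ‖A‖ + ‖B‖ * C₀ := by
    rw [hKdef, hC₀def]; field_simp; ring
  have hKpos : 0 < K := by rw [hKeq]; positivity
  have hderiv : deriv u = fun t => -A (u t) - B (u t) (u t) + f :=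
    funext fun t => (hu t).deriv
  have hdiff : Differentiable ℝ u := fun t => (hu t).differentiableAt
  have hsmooth : ∀ n : ℕ, ContDiff ℝ n u := by
    intro n
    induction n with
    | zero => exact contDiff_zero.mpr hdiff.continuous
    | succ n ih =>
      rw [show ((n+1 : ℕ) : WithTop ℕ∞) = (n : WithTop ℕ∞) + 1 by push_cast; rfl,
        contDiff_succ_iff_deriv]
      refine ⟨hdiff, by simp, ?_⟩
      rw [hderiv]
      have h1 : ContDiff ℝ n fun t => A (u t) := A.contDiff.comp ih
      have h2 : ContDiff ℝ n fun t => B (u t) (u t) :=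
        (B.contDiff.comp ih).clm_apply ih
      exact (h1.neg.sub h2).add contDiff_const
  suffices H : ∀ i : ℕ, ∀ t : ℝ, ‖iteratedDeriv i u t‖ ≤ C₀ * K ^ i * (i.factorial : ℝ) by
    intro i; exact H i 0
  intro i
  induction i using Nat.strong_induction_on with
  | _ i IH =>
    match i with
    | 0 =>
      intro t
      simpa using (huR t).trans hRC₀
    | (m + 1) =>
      intro t
      have ha : ∀ j, j ≤ m → ‖iteratedDeriv j u t‖ ≤ C₀ * K ^ j * (j.factorial : ℝ) :=
        fun j hj => IH j (Nat.lt_succ_of_le hj) t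
      have hsplit : ‖iteratedDeriv (m+1) u t‖ ≤
          ‖A‖ * ‖iteratedDeriv m u t‖ +
          ‖B‖ * (∑ j ∈ Finset.range (m + 1),
            (m.choose j : ℝ) * ‖iteratedDeriv j u t‖ * ‖iteratedDeriv (m - j) u t‖) +
          (if m = 0 then ‖f‖ else 0) := by
        rw [iteratedDeriv_succ', hderiv, ← norm_iteratedFDeriv_eq_norm_iteratedDeriv]
        have hcA : ContDiff ℝ m fun t => A (u t) := A.contDiff.comp (hsmooth m)
        have hcB : ContDiff ℝ m fun t => B (u t) (u t) :=
          (B.contDiff.comp (hsmooth m)).clm_apply (hsmooth m)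
        have efun : (fun t => -A (u t) - B (u t) (u t) + f)
            = fun t => (-A (u t)) + (-(B (u t) (u t))) + f := by
          funext s; rw [sub_eq_add_neg]
        rw [efun]
        have e1 : iteratedFDeriv ℝ m (fun t => (-A (u t)) + (-(B (u t) (u t))) + f) t =
            iteratedFDeriv ℝ m (fun t => (-A (u t)) + (-(B (u t) (u t)))) t +
            iteratedFDeriv ℝ m (fun _ => f) t :=
          iteratedFDeriv_add_apply' (hcA.neg.add hcB.neg).contDiffAt contDiff_const.contDiffAt
        have e2 : iteratedFDeriv ℝ m (fun t => (-A (u t)) + (-(B (u t) (u t)))) t =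
            iteratedFDeriv ℝ m (fun t => -A (u t)) t +
            iteratedFDeriv ℝ m (fun t => -(B (u t) (u t))) t :=
          iteratedFDeriv_add_apply' hcA.neg.contDiffAt hcB.neg.contDiffAt
        have e3 : iteratedFDeriv ℝ m (fun t => -A (u t)) t =
            -iteratedFDeriv ℝ m (fun t => A (u t)) t :=
          iteratedFDeriv_neg_apply
        have e3' : iteratedFDeriv ℝ m (fun t => -(B (u t) (u t))) t =
            -iteratedFDeriv ℝ m (fun t => B (u t) (u t)) t :=
          iteratedFDeriv_neg_apply
        have e4 : iteratedFDeriv ℝ m (fun t => A (u t)) t =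
            A.compContinuousMultilinearMap (iteratedFDeriv ℝ m u t) :=
          A.iteratedFDeriv_comp_left (hsmooth m).contDiffAt le_rfl
        rw [e1, e2, e3, e3', e4]
        refine (norm_add_le _ _).trans (add_le_add ((norm_add_le _ _).trans
          (add_le_add ?_ ?_)) ?_)
        · rw [norm_neg, ← norm_iteratedFDeriv_eq_norm_iteratedDeriv]
          exact A.norm_compContinuousMultilinearMap_le _
        · rw [norm_neg]
          have := B.norm_iteratedFDeriv_le_of_bilinear (𝕜 := ℝ)
            (hsmooth m) (hsmooth m) t (le_refl (m : WithTop ℕ∞))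
          simpa [norm_iteratedFDeriv_eq_norm_iteratedDeriv] using this
        · by_cases hm : m = 0
          · subst hm; simp [norm_iteratedFDeriv_zero]
          · rw [iteratedFDeriv_const_of_ne hm]; simp [hm]
      have hsum : (∑ j ∈ Finset.range (m + 1),
          (m.choose j : ℝ) * ‖iteratedDeriv j u t‖ * ‖iteratedDeriv (m - j) u t‖) ≤
          C₀ ^ 2 * K ^ m * ((m+1).factorial : ℝ) := by
        have step : ∀ j ∈ Finset.range (m + 1),
            (m.choose j : ℝ) * ‖iteratedDeriv j u t‖ * ‖iteratedDeriv (m - j) u t‖ ≤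
            C₀ ^ 2 * K ^ m * (m.factorial : ℝ) := by
          intro j hj
          have hjm : j ≤ m := Nat.lt_succ_iff.mp (Finset.mem_range.mp hj)
          have h1 := ha j hjm
          have h2 := ha (m - j) (Nat.sub_le m j)
          calc (m.choose j : ℝ) * ‖iteratedDeriv j u t‖ * ‖iteratedDeriv (m - j) u t‖
              ≤ (m.choose j : ℝ) * (C₀ * K ^ j * (j.factorial : ℝ)) *
                (C₀ * K ^ (m - j) * (((m - j).factorial : ℕ) : ℝ)) := by
                have hb1 : (0:ℝ) ≤ (m.choose j : ℝ) := Nat.cast_nonneg _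
                have hb2 := norm_nonneg (iteratedDeriv j u t)
                exact mul_le_mul (mul_le_mul le_rfl h1 (norm_nonneg _)
                  (by positivity)) h2 (norm_nonneg _) (by positivity)
            _ = C₀ ^ 2 * (K ^ j * K ^ (m - j)) *
                ((m.choose j * j.factorial * (m - j).factorial : ℕ) : ℝ) := by
                push_cast; ring
            _ = C₀ ^ 2 * K ^ m * (m.factorial : ℝ) := by
                rw [← pow_add, Nat.add_sub_cancel' hjm,
                  Nat.choose_mul_factorial_mul_factorial hjm]
        calc (∑ j ∈ Finset.range (m + 1),
            (m.choose j : ℝ) * ‖iteratedDeriv j u t‖ * ‖iteratedDeriv (m - j) u t‖)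
            ≤ ∑ _j ∈ Finset.range (m + 1), C₀ ^ 2 * K ^ m * (m.factorial : ℝ) :=
              Finset.sum_le_sum step
          _ = (m + 1 : ℝ) * (C₀ ^ 2 * K ^ m * (m.factorial : ℝ)) := by
              rw [Finset.sum_const, Finset.card_range]; push_cast; ring
          _ = C₀ ^ 2 * K ^ m * (((m+1).factorial : ℕ) : ℝ) := by
              rw [Nat.factorial_succ]; push_cast; ring
      have hAterm : ‖A‖ * ‖iteratedDeriv m u t‖ + (if m = 0 then ‖f‖ else 0) ≤
          ‖A‖ * (C₀ * K ^ m * ((m+1).factorial : ℝ)) := by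
        by_cases hm : m = 0
        · subst hm
          simp only [if_true, pow_zero, iteratedDeriv_zero]
          have h := huR t
          have hf1 : (((0:ℕ)+1).factorial : ℝ) = 1 := by norm_num
          have h2 : ‖A‖ * ‖u t‖ ≤ ‖A‖ * R := mul_le_mul_of_nonneg_left h hAn.le
          rw [hf1]
          linarith [hAC₀]
        · have hfact : (m.factorial : ℝ) ≤ ((m+1).factorial : ℝ) := by
            exact_mod_cast Nat.factorial_le (Nat.le_succ m)
          have h1 := ha m le_rfl
          simp only [hm, if_false, add_zero]
          calc ‖A‖ * ‖iteratedDeriv m u t‖ ≤ ‖A‖ * (C₀ * K ^ m * (m.factorial : ℝ)) := by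
                exact mul_le_mul_of_nonneg_left h1 (norm_nonneg _)
            _ ≤ ‖A‖ * (C₀ * K ^ m * ((m+1).factorial : ℝ)) :=
                mul_le_mul_of_nonneg_left
                  (mul_le_mul_of_nonneg_left hfact (by positivity)) (norm_nonneg _)
      have hBsum : ‖B‖ * (∑ j ∈ Finset.range (m + 1),
          (m.choose j : ℝ) * ‖iteratedDeriv j u t‖ * ‖iteratedDeriv (m - j) u t‖) ≤
          ‖B‖ * (C₀ ^ 2 * K ^ m * ((m+1).factorial : ℝ)) :=
        mul_le_mul_of_nonneg_left hsum (by positivity)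
      have heq : ‖A‖ * (C₀ * K ^ m * ((m+1).factorial : ℝ)) +
          ‖B‖ * (C₀ ^ 2 * K ^ m * ((m+1).factorial : ℝ)) =
          C₀ * K ^ (m+1) * ((m+1).factorial : ℝ) := by
        rw [hKeq, pow_succ]; ring
      calc ‖iteratedDeriv (m+1) u t‖ ≤ _ := hsplit
        _ ≤ C₀ * K ^ (m+1) * ((m+1).factorial : ℝ) := by linarith
end

section
/- Let v ∈ B_R, i_max ∈ N, and let v(t) = Ψ_t(v) solve du/dt = -Au - B(u,u) + f. Then for all t ≥ 0 with C_der·t < 1, ‖v(t) - Σ_{i=0}^{i_max} (tⁱ/i!)·Dⁱv‖ ≤ C₀·(C_der·t)^{i_max+1}, where C₀ = R + ‖f‖/‖A‖ and C_der = ‖A‖ + ‖B‖R + (‖B‖/‖A‖)‖f‖. -/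
open Finset Set

set_option maxHeartbeats 1000000
set_option synthInstance.maxHeartbeats 200000

lemma taylor_rem_aux {E : Type*} [NormedAddCommGroup E] [NormedSpace ℝ E] (n : ℕ) :
    ∀ (w : ℝ → E) (L t : ℝ), (∀ m : ℕ, ContDiff ℝ m w) → 0 ≤ L → 0 ≤ t →
      (∀ s : ℝ, ‖iteratedDeriv (n + 1) w s‖ ≤ L) →
      ‖w t - ∑ i ∈ Finset.range (n + 1), (t ^ i / (i.factorial : ℝ)) • iteratedDeriv i w 0‖ ≤
        L * t ^ (n + 1) / (n + 1).factorial := by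
  induction n with
  | zero =>
    intro w L t hw hL ht hbd
    have hsum : ∑ i ∈ Finset.range 1, (t ^ i / (i.factorial : ℝ)) • iteratedDeriv i w 0 = w 0 := by
      simp
    rw [hsum]
    have hcont : ContinuousOn w (Icc 0 t) := ((hw 1).continuous).continuousOn
    have hdiff : Differentiable ℝ w := (hw 1).differentiable (by simp)
    have := norm_image_sub_le_of_norm_deriv_right_le_segment hcont
      (fun x _ => (hdiff x).hasDerivAt.hasDerivWithinAt)
      (fun x _ => by
        have := hbd x
        rwa [show (0:ℕ)+1 = 1 from rfl, iteratedDeriv_one] at this) t (right_mem_Icc.2 ht)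
    simpa using this
  | succ n IH =>
    intro w L t hw hL ht hbd
    have hdiff : Differentiable ℝ w := (hw 1).differentiable (by simp)
    set g : ℝ → E := fun s =>
      w s - ∑ i ∈ Finset.range (n + 2), (s ^ i / (i.factorial : ℝ)) • iteratedDeriv i w 0 with hg
    have hw' : ∀ m : ℕ, ContDiff ℝ m (deriv w) := by
      intro m
      have h := hw (m + 1)
      rw [show ((m + 1 : ℕ) : WithTop ℕ∞) = (m : WithTop ℕ∞) + 1 by push_cast; ring,
        contDiff_succ_iff_deriv] at h
      exact h.2.2
    have hgd : ∀ s : ℝ, HasDerivAt g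
        (deriv w s - ∑ i ∈ Finset.range (n + 1),
          (s ^ i / (i.factorial : ℝ)) • iteratedDeriv i (deriv w) 0) s := by
      intro s
      have h1 : HasDerivAt (fun s : ℝ => ∑ i ∈ Finset.range (n + 2),
          (s ^ i / (i.factorial : ℝ)) • iteratedDeriv i w 0)
          (∑ i ∈ Finset.range (n + 2),
            (((i : ℝ) * s ^ (i - 1)) / (i.factorial : ℝ)) • iteratedDeriv i w 0) s := by
        apply HasDerivAt.fun_sum
        intro i _
        exact (((hasDerivAt_pow i s).div_const _)).smul_const _
      have h2 : (∑ i ∈ Finset.range (n + 2),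
            (((i : ℝ) * s ^ (i - 1)) / (i.factorial : ℝ)) • iteratedDeriv i w 0)
          = ∑ i ∈ Finset.range (n + 1),
            (s ^ i / (i.factorial : ℝ)) • iteratedDeriv i (deriv w) 0 := by
        rw [Finset.sum_range_succ']
        simp only [Nat.cast_zero, zero_mul, zero_div, zero_smul, add_zero]
        refine Finset.sum_congr rfl fun i _ => ?_
        rw [← iteratedDeriv_succ']
        congr 1
        rw [Nat.factorial_succ]
        push_cast
        have h3 : (i.factorial : ℝ) ≠ 0 := Nat.cast_ne_zero.2 i.factorial_ne_zero
        field_simp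
      rw [← h2]
      exact ((hdiff s).hasDerivAt).sub h1
    have hg0 : g 0 = 0 := by
      have : ∑ i ∈ Finset.range (n + 2), ((0:ℝ) ^ i / (i.factorial : ℝ)) • iteratedDeriv i w 0
          = w 0 := by
        rw [Finset.sum_eq_single 0]
        · simp
        · intro b _ hb; simp [zero_pow hb]
        · simp
      simp [hg, this]
    have hbound : ∀ x ∈ Ico 0 t, ‖deriv w x - ∑ i ∈ Finset.range (n + 1),
        (x ^ i / (i.factorial : ℝ)) • iteratedDeriv i (deriv w) 0‖
        ≤ L * x ^ (n + 1) / (n + 1).factorial := by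
      intro x hx
      refine IH (deriv w) L x hw' hL hx.1 fun s => ?_
      rw [← iteratedDeriv_succ']
      exact hbd s
    have hB : ∀ x : ℝ, HasDerivAt (fun s : ℝ => L * s ^ (n + 2) / (n + 2).factorial)
        (L * x ^ (n + 1) / (n + 1).factorial) x := by
      intro x
      have h := ((hasDerivAt_pow (n + 2) x).const_mul L).div_const ((n + 2).factorial : ℝ)
      refine h.congr_deriv (Eq.symm ?_)
      have h3 : ((n+1).factorial : ℝ) ≠ 0 := Nat.cast_ne_zero.2 (n+1).factorial_ne_zero
      rw [show (n + 2).factorial = (n + 2) * (n + 1).factorial from rfl]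
      push_cast
      field_simp
    have hgc : ContinuousOn g (Icc 0 t) :=
      fun x hx => ((hgd x).differentiableAt.continuousAt).continuousWithinAt
    have key := image_norm_le_of_norm_deriv_right_le_deriv_boundary hgc
      (fun x _ => (hgd x).hasDerivWithinAt) (by simp [hg0]) hB hbound (right_mem_Icc.2 ht)
    simpa [hg] using key

lemma flow_deriv_bound {d : ℕ}
    (A : EuclideanSpace ℝ (Fin d) →L[ℝ] EuclideanSpace ℝ (Fin d))
    (B : EuclideanSpace ℝ (Fin d) →L[ℝ]
      EuclideanSpace ℝ (Fin d) →L[ℝ] EuclideanSpace ℝ (Fin d))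
    (f : EuclideanSpace ℝ (Fin d))
    {R : ℝ} (hR : 0 < R) (hA : A ≠ 0)
    (u : ℝ → EuclideanSpace ℝ (Fin d))
    (hu : ∀ t : ℝ, HasDerivAt u (-A (u t) - B (u t) (u t) + f) t)
    (huR : ∀ t : ℝ, ‖u t‖ ≤ R) :
    ∀ i : ℕ, ∀ s : ℝ, ‖iteratedDeriv i u s‖ ≤
      (R + ‖f‖ / ‖A‖) * (‖A‖ + ‖B‖ * R + (‖B‖ / ‖A‖) * ‖f‖) ^ i * i.factorial := by
  set C0 : ℝ := R + ‖f‖ / ‖A‖ with hC0def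
  set Cd : ℝ := ‖A‖ + ‖B‖ * R + (‖B‖ / ‖A‖) * ‖f‖ with hCddef
  have hA0 : (0:ℝ) < ‖A‖ := norm_pos_iff.2 hA
  have hB0 : (0:ℝ) ≤ ‖B‖ := norm_nonneg B
  have hfA : (0:ℝ) ≤ ‖f‖ / ‖A‖ := div_nonneg (norm_nonneg f) hA0.le
  have hRC0 : R ≤ C0 := le_add_of_nonneg_right hfA
  have hC0 : (0:ℝ) < C0 := lt_of_lt_of_le hR hRC0
  have hCdEq : Cd = ‖A‖ + ‖B‖ * C0 := by rw [hCddef, hC0def]; ring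
  have hCd : (0:ℝ) < Cd := by
    rw [hCdEq]
    exact add_pos_of_pos_of_nonneg hA0 (mul_nonneg hB0 hC0.le)
  have hAC0 : ‖A‖ * C0 = ‖A‖ * R + ‖f‖ := by
    rw [hC0def, mul_add, mul_div_cancel₀ _ hA0.ne']
  have hdiff : Differentiable ℝ u := fun s => (hu s).differentiableAt
  have hderiv_eq : deriv u = fun s => -A (u s) - B (u s) (u s) + f :=
    funext fun s => (hu s).deriv
  have hsm : ∀ n : ℕ, ContDiff ℝ n u := by
    intro n
    induction n with
    | zero => exact contDiff_zero.2 hdiff.continuous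
    | succ n ih =>
      rw [show ((n + 1 : ℕ) : WithTop ℕ∞) = (n : WithTop ℕ∞) + 1 by push_cast; ring,
        contDiff_succ_iff_deriv]
      refine ⟨hdiff, by simp, ?_⟩
      rw [hderiv_eq]
      have h1 : ContDiff ℝ n fun s => A (u s) := A.contDiff.comp ih
      have h2 : ContDiff ℝ n fun s => B (u s) (u s) :=
        (B.isBoundedBilinearMap.contDiff).comp (ih.prodMk ih)
      exact (h1.neg.sub h2).add contDiff_const
  have hval : ∀ x : EuclideanSpace ℝ (Fin d), ‖x‖ ≤ R →
      ‖-A x - B x x + f‖ ≤ ‖A‖ * R + ‖B‖ * R * R + ‖f‖ := by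
    intro x hx
    have h1 : ‖A x‖ ≤ ‖A‖ * R :=
      (A.le_opNorm x).trans (mul_le_mul_of_nonneg_left hx (norm_nonneg A))
    have h2 : ‖B x x‖ ≤ ‖B‖ * R * R := by
      calc ‖B x x‖ ≤ ‖B x‖ * ‖x‖ := (B x).le_opNorm x
        _ ≤ (‖B‖ * ‖x‖) * ‖x‖ :=
          mul_le_mul_of_nonneg_right (B.le_opNorm x) (norm_nonneg x)
        _ = ‖B‖ * (‖x‖ * ‖x‖) := by ring
        _ ≤ ‖B‖ * (R * R) := mul_le_mul_of_nonneg_left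
            (mul_le_mul hx hx (norm_nonneg x) hR.le) hB0
        _ = ‖B‖ * R * R := by ring
    calc ‖-A x - B x x + f‖ ≤ ‖-A x - B x x‖ + ‖f‖ := norm_add_le _ _
      _ ≤ ‖A x‖ + ‖B x x‖ + ‖f‖ := by
          have := norm_sub_le (-A x) (B x x)
          rw [norm_neg] at this
          linarith
      _ ≤ ‖A‖ * R + ‖B‖ * R * R + ‖f‖ := by linarith
  intro i
  induction i using Nat.strong_induction_on with
  | _ i ih =>
    match i with
    | 0 =>
      intro s
      simpa using (huR s).trans hRC0
    | 1 =>
      intro s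
      rw [iteratedDeriv_one, (hu s).deriv]
      refine (hval (u s) (huR s)).trans ?_
      have hBR : ‖B‖ * R * R ≤ ‖B‖ * (C0 * C0) := by
        calc ‖B‖ * R * R = ‖B‖ * (R * R) := by ring
          _ ≤ ‖B‖ * (C0 * C0) := mul_le_mul_of_nonneg_left
              (mul_le_mul hRC0 hRC0 hR.le hC0.le) hB0
      have hstep : ‖A‖ * R + ‖B‖ * R * R + ‖f‖ ≤ ‖A‖ * C0 + ‖B‖ * (C0 * C0) := by
        linarith [hAC0]
      refine hstep.trans_eq ?_
      rw [hCdEq]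
      simp only [pow_one, Nat.factorial_one, Nat.cast_one, mul_one]
      ring
    | (n + 2) =>
      intro s
      set G1 : ℝ → EuclideanSpace ℝ (Fin d) := fun s => A (u s) with hG1def
      set G2 : ℝ → EuclideanSpace ℝ (Fin d) := fun s => B (u s) (u s) with hG2def
      set G3 : ℝ → EuclideanSpace ℝ (Fin d) := fun _ => f with hG3def
      have hG1 : ContDiff ℝ (n + 1 : ℕ) G1 := A.contDiff.comp (hsm (n + 1))
      have hG2 : ContDiff ℝ (n + 1 : ℕ) G2 :=
        (B.isBoundedBilinearMap.contDiff).comp ((hsm (n + 1)).prodMk (hsm (n + 1)))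
      have hnG1 : ContDiff ℝ (n + 1 : ℕ) (-G1) := hG1.neg
      have hnG2 : ContDiff ℝ (n + 1 : ℕ) (-G2) := hG2.neg
      have hG3 : ContDiff ℝ (n + 1 : ℕ) G3 := contDiff_const
      have hder' : deriv u = -G1 + (-G2 + G3) := by
        rw [hderiv_eq]
        funext x
        simp only [Pi.add_apply, Pi.neg_apply, hG1def, hG2def, hG3def, sub_eq_add_neg]
        abel
      have hsum23 : ContDiff ℝ (n + 1 : ℕ) (-G2 + G3) := hnG2.add hG3
      have e1 : iteratedFDeriv ℝ (n + 1) (deriv u) s =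
          iteratedFDeriv ℝ (n + 1) (-G1) s +
            (iteratedFDeriv ℝ (n + 1) (-G2) s + iteratedFDeriv ℝ (n + 1) G3 s) := by
        rw [hder', iteratedFDeriv_add_apply hnG1.contDiffAt hsum23.contDiffAt,
          iteratedFDeriv_add_apply hnG2.contDiffAt hG3.contDiffAt]
      have hn1 : ‖iteratedFDeriv ℝ (n + 1) (-G1) s‖ ≤
          ‖A‖ * (C0 * Cd ^ (n + 1) * (n + 1).factorial) := by
        rw [iteratedFDeriv_neg_apply, norm_neg,
          show G1 = (⇑A) ∘ u from rfl,
          A.iteratedFDeriv_comp_left (hsm (n + 1)).contDiffAt le_rfl]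
        refine (ContinuousLinearMap.norm_compContinuousMultilinearMap_le _ _).trans ?_
        refine mul_le_mul_of_nonneg_left ?_ (norm_nonneg A)
        rw [norm_iteratedFDeriv_eq_norm_iteratedDeriv]
        exact ih (n + 1) (by omega) s
      have hn3 : iteratedFDeriv ℝ (n + 1) G3 s = 0 := by
        have h := iteratedFDeriv_const_of_ne (𝕜 := ℝ) (E := ℝ) (n := n + 1)
          (Nat.succ_ne_zero n) f
        exact congrFun h s
      have hn2 : ‖iteratedFDeriv ℝ (n + 1) (-G2) s‖ ≤
          ‖B‖ * ((n + 2).factorial * (C0 ^ 2 * Cd ^ (n + 1))) := by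
        rw [iteratedFDeriv_neg_apply, norm_neg]
        refine (B.norm_iteratedFDeriv_le_of_bilinear (hsm (n + 1)) (hsm (n + 1)) s
          (le_refl ((n + 1 : ℕ) : WithTop ℕ∞))).trans ?_
        refine mul_le_mul_of_nonneg_left ?_ hB0
        calc ∑ j ∈ Finset.range (n + 1 + 1), ((n + 1).choose j : ℝ) *
              ‖iteratedFDeriv ℝ j u s‖ * ‖iteratedFDeriv ℝ (n + 1 - j) u s‖
            ≤ ∑ j ∈ Finset.range (n + 1 + 1),
              ((n + 1).factorial : ℝ) * (C0 ^ 2 * Cd ^ (n + 1)) := by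
              refine Finset.sum_le_sum fun j hj => ?_
              have hjn : j ≤ n + 1 := Nat.lt_succ_iff.1 (Finset.mem_range.1 hj)
              have b1 : ‖iteratedFDeriv ℝ j u s‖ ≤ C0 * Cd ^ j * j.factorial := by
                rw [norm_iteratedFDeriv_eq_norm_iteratedDeriv]
                exact ih j (by omega) s
              have b2 : ‖iteratedFDeriv ℝ (n + 1 - j) u s‖ ≤
                  C0 * Cd ^ (n + 1 - j) * (n + 1 - j).factorial := by
                rw [norm_iteratedFDeriv_eq_norm_iteratedDeriv]
                exact ih (n + 1 - j) (by omega) s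
              have hch : ((n + 1).choose j : ℝ) * (j.factorial : ℝ) *
                  ((n + 1 - j).factorial : ℝ) = ((n + 1).factorial : ℝ) := by
                exact_mod_cast congrArg (Nat.cast (R := ℝ))
                  (Nat.choose_mul_factorial_mul_factorial hjn)
              have hpow : Cd ^ j * Cd ^ (n + 1 - j) = Cd ^ (n + 1) := by
                rw [← pow_add, Nat.add_sub_cancel' hjn]
              have hbj : (0:ℝ) ≤ C0 * Cd ^ j * j.factorial :=
                mul_nonneg (mul_nonneg hC0.le (pow_nonneg hCd.le _)) (Nat.cast_nonneg _)
              calc ((n + 1).choose j : ℝ) * ‖iteratedFDeriv ℝ j u s‖ *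
                    ‖iteratedFDeriv ℝ (n + 1 - j) u s‖
                  ≤ ((n + 1).choose j : ℝ) * (C0 * Cd ^ j * j.factorial) *
                    (C0 * Cd ^ (n + 1 - j) * (n + 1 - j).factorial) := by
                    exact mul_le_mul
                      (mul_le_mul_of_nonneg_left b1 (Nat.cast_nonneg _)) b2 (norm_nonneg _)
                      (mul_nonneg (Nat.cast_nonneg _) hbj)
                _ = (((n + 1).choose j : ℝ) * j.factorial * (n + 1 - j).factorial) *
                    (Cd ^ j * Cd ^ (n + 1 - j)) * C0 ^ 2 := by ring
                _ = ((n + 1).factorial : ℝ) * (C0 ^ 2 * Cd ^ (n + 1)) := by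
                    rw [hch, hpow]; ring
          _ = ((n + 2).factorial : ℝ) * (C0 ^ 2 * Cd ^ (n + 1)) := by
              rw [Finset.sum_const, Finset.card_range,
                show (n + 2).factorial = (n + 2) * (n + 1).factorial from rfl]
              push_cast
              ring
      have hfact : ((n + 1).factorial : ℝ) ≤ ((n + 2).factorial : ℝ) :=
        Nat.cast_le.2 (Nat.factorial_le (by omega))
      calc ‖iteratedDeriv (n + 2) u s‖
          = ‖iteratedFDeriv ℝ (n + 1) (deriv u) s‖ := by
            rw [iteratedDeriv_succ', ← norm_iteratedFDeriv_eq_norm_iteratedDeriv]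
        _ ≤ ‖iteratedFDeriv ℝ (n + 1) (-G1) s‖ +
            (‖iteratedFDeriv ℝ (n + 1) (-G2) s‖ + ‖iteratedFDeriv ℝ (n + 1) G3 s‖) := by
            rw [e1]
            exact (norm_add_le _ _).trans
              (add_le_add le_rfl (norm_add_le _ _))
        _ ≤ ‖A‖ * (C0 * Cd ^ (n + 1) * (n + 1).factorial) +
            (‖B‖ * ((n + 2).factorial * (C0 ^ 2 * Cd ^ (n + 1))) + 0) := by
            rw [hn3, norm_zero]
            exact add_le_add hn1 (add_le_add hn2 le_rfl)
        _ ≤ ‖A‖ * (C0 * Cd ^ (n + 1) * ((n + 2).factorial : ℝ)) +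
            (‖B‖ * ((n + 2).factorial * (C0 ^ 2 * Cd ^ (n + 1))) + 0) := by
            have h1 : ‖A‖ * (C0 * Cd ^ (n + 1) * ((n + 1).factorial : ℝ)) ≤
                ‖A‖ * (C0 * Cd ^ (n + 1) * ((n + 2).factorial : ℝ)) := by
              refine mul_le_mul_of_nonneg_left ?_ hA0.le
              refine mul_le_mul_of_nonneg_left hfact ?_
              exact mul_nonneg hC0.le (pow_nonneg hCd.le _)
            exact add_le_add h1 le_rfl
        _ = C0 * (Cd ^ (n + 1) * (‖A‖ + ‖B‖ * C0)) * ((n + 2).factorial : ℝ) := by ring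
        _ = C0 * Cd ^ (n + 2) * (n + 2).factorial := by rw [← hCdEq, ← pow_succ]

lemma flow_smooth {d : ℕ}
    (A : EuclideanSpace ℝ (Fin d) →L[ℝ] EuclideanSpace ℝ (Fin d))
    (B : EuclideanSpace ℝ (Fin d) →L[ℝ]
      EuclideanSpace ℝ (Fin d) →L[ℝ] EuclideanSpace ℝ (Fin d))
    (f : EuclideanSpace ℝ (Fin d))
    (u : ℝ → EuclideanSpace ℝ (Fin d))
    (hu : ∀ t : ℝ, HasDerivAt u (-A (u t) - B (u t) (u t) + f) t) :
    ∀ n : ℕ, ContDiff ℝ n u := by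
  have hdiff : Differentiable ℝ u := fun s => (hu s).differentiableAt
  have hderiv_eq : deriv u = fun s => -A (u s) - B (u s) (u s) + f :=
    funext fun s => (hu s).deriv
  intro n
  induction n with
  | zero => exact contDiff_zero.2 hdiff.continuous
  | succ n ih =>
    rw [show ((n + 1 : ℕ) : WithTop ℕ∞) = (n : WithTop ℕ∞) + 1 by push_cast; ring,
      contDiff_succ_iff_deriv]
    refine ⟨hdiff, by simp, ?_⟩
    rw [hderiv_eq]
    have h1 : ContDiff ℝ n fun s => A (u s) := A.contDiff.comp ih
    have h2 : ContDiff ℝ n fun s => B (u s) (u s) :=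
      (B.isBoundedBilinearMap.contDiff).comp (ih.prodMk ih)
    exact (h1.neg.sub h2).add contDiff_const

/-- Taylor truncation bound for the flow: with `C₀ = R + ‖f‖/‖A‖` and
`C_der = ‖A‖ + ‖B‖R + (‖B‖/‖A‖)‖f‖`, the solution `u` of
`du/dt = -Au - B(u,u) + f` started at `v ∈ B_R` satisfies, for `0 ≤ t` with
`C_der·t < 1`,
`‖u(t) - ∑_{i=0}^{i_max} (tⁱ/i!)·Dⁱv‖ ≤ C₀·(C_der·t)^{i_max+1}`. -/
theorem taylor_truncation_bound_flow
    (d : ℕ)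
    (A : EuclideanSpace ℝ (Fin d) →L[ℝ] EuclideanSpace ℝ (Fin d))
    (B : EuclideanSpace ℝ (Fin d) →L[ℝ]
      EuclideanSpace ℝ (Fin d) →L[ℝ] EuclideanSpace ℝ (Fin d))
    (f : EuclideanSpace ℝ (Fin d))
    (R : ℝ) (hR : 0 < R) (hA : A ≠ 0)
    (u : ℝ → EuclideanSpace ℝ (Fin d)) (v : EuclideanSpace ℝ (Fin d))
    (hu0 : u 0 = v) (hvR : ‖v‖ ≤ R)
    (hu : ∀ t : ℝ, HasDerivAt u (-A (u t) - B (u t) (u t) + f) t)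
    (huR : ∀ t : ℝ, ‖u t‖ ≤ R)
    (imax : ℕ) (t : ℝ) (ht0 : 0 ≤ t)
    (ht1 : (‖A‖ + ‖B‖ * R + (‖B‖ / ‖A‖) * ‖f‖) * t < 1) :
    ‖u t - ∑ i ∈ Finset.range (imax + 1),
        (t ^ i / (i.factorial : ℝ)) • iteratedDeriv i u 0‖ ≤
      (R + ‖f‖ / ‖A‖) *
        ((‖A‖ + ‖B‖ * R + (‖B‖ / ‖A‖) * ‖f‖) * t) ^ (imax + 1) := by
  set C0 : ℝ := R + ‖f‖ / ‖A‖ with hC0def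
  set Cd : ℝ := ‖A‖ + ‖B‖ * R + (‖B‖ / ‖A‖) * ‖f‖ with hCddef
  have hA0 : (0:ℝ) < ‖A‖ := norm_pos_iff.2 hA
  have hfA : (0:ℝ) ≤ ‖f‖ / ‖A‖ := div_nonneg (norm_nonneg f) hA0.le
  have hC0 : (0:ℝ) < C0 := lt_of_lt_of_le hR (le_add_of_nonneg_right hfA)
  have hCd : (0:ℝ) ≤ Cd := by
    rw [hCddef]
    have : (0:ℝ) ≤ ‖B‖ * R := mul_nonneg (norm_nonneg B) hR.le
    have : (0:ℝ) ≤ (‖B‖ / ‖A‖) * ‖f‖ :=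
      mul_nonneg (div_nonneg (norm_nonneg B) hA0.le) (norm_nonneg f)
    positivity
  set L : ℝ := C0 * Cd ^ (imax + 1) * (imax + 1).factorial with hLdef
  have hL : (0:ℝ) ≤ L := by
    rw [hLdef]
    exact mul_nonneg (mul_nonneg hC0.le (pow_nonneg hCd _)) (Nat.cast_nonneg _)
  have hbd : ∀ s : ℝ, ‖iteratedDeriv (imax + 1) u s‖ ≤ L :=
    fun s => flow_deriv_bound A B f hR hA u hu huR (imax + 1) s
  have key := taylor_rem_aux imax u L t (flow_smooth A B f u hu) hL ht0 hbd
  refine key.trans_eq ?_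
  have hfac : (((imax + 1).factorial : ℝ)) ≠ 0 :=
    Nat.cast_ne_zero.2 (imax + 1).factorial_ne_zero
  rw [hLdef, mul_pow]
  field_simp
end
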